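/- Let m₁, m₂ be natural numbers and let G be a graph on n ≥ m₁ + m₂ + 2 vertices containing no copy of the double star S(m₁, m₂). Let v be a vertex of G and let A ⊆ N(v) be a set of neighbours of v with |A| > m₁ such that every vertex u ∈ A has deg(u) > m₂. Then every vertex w ∈ A has at most m₁ + m₂ − |A| neighbours in V(G) \ (A ∪ {v}). -/

import Mathlib

open SimpleGraph

/-- `G` contains a copy of `H` as a subgraph, i.e. there is an injective graph
homomorphism from `H` to `G`. -/
def Contains {V W : Type*} (G : SimpleGraph V) (H : SimpleGraph W) : Prop :=
  ∃ f : H →g G, Function.Injective f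

/-- The double star `S(m₁, m₂)`: two adjacent centres `0` and `1`, where centre `0`
has `m₁` leaves (the vertices `2, …, m₁ + 1`) and centre `1` has `m₂` leaves
(the vertices `m₁ + 2, …, m₁ + m₂ + 1`). -/
def DoubleStar (m₁ m₂ : ℕ) : SimpleGraph (Fin (m₁ + m₂ + 2)) :=
  SimpleGraph.fromRel (fun i j =>
    (i.val = 0 ∧ 0 < j.val ∧ j.val < m₁ + 2) ∨ (i.val = 1 ∧ m₁ + 2 ≤ j.val))

/-- the map sending the double star's vertices to `v`, `w`, and the two leaf sets. -/
def embedFun (m₁ m₂ : ℕ) {V : Type*} (v w : V)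
    (g₁ : Fin m₁ → V) (g₂ : Fin m₂ → V) : Fin (m₁ + m₂ + 2) → V := fun i =>
  if _ : i.val = 0 then v
  else if _ : i.val = 1 then w
  else if h2 : i.val < m₁ + 2 then g₁ ⟨i.val - 2, by omega⟩
  else g₂ ⟨i.val - (m₁ + 2), by have := i.isLt; omega⟩

lemma embedFun_zero (m₁ m₂ : ℕ) {V : Type*} (v w : V)
    (g₁ : Fin m₁ → V) (g₂ : Fin m₂ → V) (i : Fin (m₁ + m₂ + 2)) (h : i.val = 0) :
    embedFun m₁ m₂ v w g₁ g₂ i = v := by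
  simp only [embedFun]; rw [dif_pos h]

lemma embedFun_one (m₁ m₂ : ℕ) {V : Type*} (v w : V)
    (g₁ : Fin m₁ → V) (g₂ : Fin m₂ → V) (i : Fin (m₁ + m₂ + 2)) (h : i.val = 1) :
    embedFun m₁ m₂ v w g₁ g₂ i = w := by
  simp only [embedFun]; rw [dif_neg (by omega), dif_pos h]

lemma embedFun_left (m₁ m₂ : ℕ) {V : Type*} (v w : V)
    (g₁ : Fin m₁ → V) (g₂ : Fin m₂ → V) (i : Fin (m₁ + m₂ + 2))
    (h1 : 2 ≤ i.val) (h2 : i.val < m₁ + 2) :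
    embedFun m₁ m₂ v w g₁ g₂ i = g₁ ⟨i.val - 2, by omega⟩ := by
  simp only [embedFun]; rw [dif_neg (by omega), dif_neg (by omega), dif_pos h2]

lemma embedFun_right (m₁ m₂ : ℕ) {V : Type*} (v w : V)
    (g₁ : Fin m₁ → V) (g₂ : Fin m₂ → V) (i : Fin (m₁ + m₂ + 2))
    (h : m₁ + 2 ≤ i.val) :
    embedFun m₁ m₂ v w g₁ g₂ i = g₂ ⟨i.val - (m₁ + 2), by have := i.isLt; omega⟩ := by
  simp only [embedFun]; rw [dif_neg (by omega), dif_neg (by omega), dif_neg (by omega)]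

theorem stmt_3 {V : Type*} [Fintype V] [DecidableEq V]
    (m₁ m₂ : ℕ) (G : SimpleGraph V) [DecidableRel G.Adj]
    (hn : m₁ + m₂ + 2 ≤ Fintype.card V)
    (hG : ¬ Contains G (DoubleStar m₁ m₂))
    (v : V) (A : Finset V) (hA : A ⊆ G.neighborFinset v) (hAcard : m₁ < A.card)
    (hdeg : ∀ u ∈ A, m₂ < G.degree u)
    (w : V) (hw : w ∈ A) :
    ((G.neighborFinset w \ insert v A).card : ℤ) ≤ m₁ + m₂ - A.card := by
  classical
  by_contra hcon
  push_neg at hcon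
  set Nw := G.neighborFinset w with hNw
  set B := Nw \ insert v A with hB
  have hABcard : m₁ + m₂ + 1 ≤ A.card + B.card := by
    have h0 : (0:ℤ) ≤ (B.card : ℤ) := by positivity
    omega
  have hvA : v ∉ A := fun h => G.irrefl ((SimpleGraph.mem_neighborFinset _ _ _).1 (hA h))
  have hvw : G.Adj v w := (SimpleGraph.mem_neighborFinset _ _ _).1 (hA hw)
  have hwNw : w ∉ Nw := by simp [hNw]
  have hdegw : m₂ < Nw.card := by
    have := hdeg w hw
    rwa [SimpleGraph.degree] at this
  -- split A \ {w} into the part inside N(w) and the part outside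
  set S := A.erase w with hS
  have hScard : S.card = A.card - 1 := Finset.card_erase_of_mem hw
  set C := S ∩ Nw with hC
  set D := S \ Nw with hD
  have hCD : C.card + D.card = S.card := Finset.card_inter_add_card_sdiff S Nw
  -- choose the leaves L₁ of v
  have hL₁ : ∃ L₁ : Finset V, L₁ ⊆ S ∧ L₁.card = m₁ ∧ m₂ ≤ (Nw \ insert v L₁).card := by
    by_cases hDc : m₁ ≤ D.card
    · obtain ⟨L₁, hL₁D, hL₁card⟩ := Finset.exists_subset_card_eq hDc
      refine ⟨L₁, hL₁D.trans (Finset.sdiff_subset), hL₁card, ?_⟩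
      have hsub : Nw \ {v} ⊆ Nw \ insert v L₁ := by
        intro x hx
        rw [Finset.mem_sdiff] at hx ⊢
        refine ⟨hx.1, ?_⟩
        simp only [Finset.mem_insert]
        rintro (rfl | hxL)
        · exact hx.2 (Finset.mem_singleton_self x)
        · exact (Finset.mem_sdiff.1 (hL₁D hxL)).2 hx.1
      have h1 : Nw.card ≤ (Nw \ {v}).card + 1 := by
        have : Nw ⊆ insert v (Nw \ {v}) := by
          intro x hx
          by_cases hxv : x = v
          · simp [hxv]
          · exact Finset.mem_insert_of_mem (Finset.mem_sdiff.2 ⟨hx, by simp [hxv]⟩)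
        calc Nw.card ≤ (insert v (Nw \ {v})).card := Finset.card_le_card this
          _ ≤ (Nw \ {v}).card + 1 := Finset.card_insert_le _ _
      have := Finset.card_le_card hsub
      omega
    · push_neg at hDc
      have hCc : m₁ - D.card ≤ C.card := by omega
      obtain ⟨C', hC'C, hC'card⟩ := Finset.exists_subset_card_eq hCc
      refine ⟨D ∪ C', Finset.union_subset Finset.sdiff_subset
        (hC'C.trans Finset.inter_subset_left), ?_, ?_⟩
      · rw [Finset.card_union_of_disjoint, hC'card]
        · omega
        · exact Finset.disjoint_left.2 fun x hxD hxC' =>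
            (Finset.mem_sdiff.1 hxD).2 (Finset.mem_inter.1 (hC'C hxC')).2
      · have hsub : B ∪ (C \ C') ⊆ Nw \ insert v (D ∪ C') := by
          intro x hx
          rw [Finset.mem_union] at hx
          rw [Finset.mem_sdiff, Finset.mem_insert, Finset.mem_union]
          rcases hx with hx | hx
          · rw [hB, Finset.mem_sdiff, Finset.mem_insert] at hx
            push_neg at hx
            refine ⟨hx.1, ?_⟩
            push_neg
            refine ⟨hx.2.1, fun h => hx.2.2 ?_, fun h => hx.2.2 ?_⟩
            · exact (Finset.erase_subset _ _) (Finset.sdiff_subset h)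
            · exact (Finset.erase_subset _ _) (Finset.inter_subset_left (hC'C h))
          · rw [Finset.mem_sdiff] at hx
            have hxC := hx.1
            have hxS : x ∈ S := (Finset.mem_inter.1 hxC).1
            refine ⟨(Finset.mem_inter.1 hxC).2, ?_⟩
            push_neg
            refine ⟨?_, fun h => (Finset.mem_sdiff.1 h).2 (Finset.mem_inter.1 hxC).2,
              hx.2⟩
            rintro rfl
            exact hvA ((Finset.erase_subset _ _) hxS)
        have hdisj : Disjoint B (C \ C') := by
          refine Finset.disjoint_left.2 fun x hxB hxC => ?_
          rw [hB, Finset.mem_sdiff, Finset.mem_insert] at hxB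
          push_neg at hxB
          exact hxB.2.2 ((Finset.erase_subset _ _)
            (Finset.inter_subset_left (Finset.mem_sdiff.1 hxC).1))
        have h1 := Finset.card_le_card hsub
        rw [Finset.card_union_of_disjoint hdisj, Finset.card_sdiff_of_subset hC'C, hC'card] at h1
        omega
  obtain ⟨L₁, hL₁S, hL₁card, hWcard⟩ := hL₁
  obtain ⟨L₂, hL₂W, hL₂card⟩ := Finset.exists_subset_card_eq hWcard
  -- basic facts about the pieces
  have hL₁A : L₁ ⊆ A := hL₁S.trans (Finset.erase_subset _ _)
  have hwL₁ : w ∉ L₁ := fun h => (Finset.mem_erase.1 (hL₁S h)).1 rfl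
  have hvL₁ : v ∉ L₁ := fun h => hvA (hL₁A h)
  have hL₂Nw : L₂ ⊆ Nw := hL₂W.trans Finset.sdiff_subset
  have hvL₂ : v ∉ L₂ := fun h =>
    (Finset.mem_sdiff.1 (hL₂W h)).2 (Finset.mem_insert_self _ _)
  have hwL₂ : w ∉ L₂ := fun h => hwNw (hL₂Nw h)
  have hdisj12 : Disjoint L₁ L₂ := Finset.disjoint_left.2 fun x hx1 hx2 =>
    (Finset.mem_sdiff.1 (hL₂W hx2)).2 (Finset.mem_insert_of_mem hx1)
  -- the two leaf enumerations
  set g₁ : Fin m₁ → V := fun k => ((L₁.equivFinOfCardEq hL₁card).symm k : V) with hg₁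
  set g₂ : Fin m₂ → V := fun k => ((L₂.equivFinOfCardEq hL₂card).symm k : V) with hg₂
  have hg₁mem : ∀ k, g₁ k ∈ L₁ := fun k => ((L₁.equivFinOfCardEq hL₁card).symm k).2
  have hg₂mem : ∀ k, g₂ k ∈ L₂ := fun k => ((L₂.equivFinOfCardEq hL₂card).symm k).2
  have hg₁inj : Function.Injective g₁ := fun a b h =>
    (L₁.equivFinOfCardEq hL₁card).symm.injective (Subtype.coe_injective h)
  have hg₂inj : Function.Injective g₂ := fun a b h =>
    (L₂.equivFinOfCardEq hL₂card).symm.injective (Subtype.coe_injective h)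
  set f := embedFun m₁ m₂ v w g₁ g₂ with hf
  have regions : ∀ i : Fin (m₁ + m₂ + 2),
      i.val = 0 ∨ i.val = 1 ∨ (2 ≤ i.val ∧ i.val < m₁ + 2) ∨ m₁ + 2 ≤ i.val :=
    fun i => by omega
  have hvw' : v ≠ w := hvw.ne
  -- the homomorphism property
  have key : ∀ i j : Fin (m₁ + m₂ + 2),
      ((i.val = 0 ∧ 0 < j.val ∧ j.val < m₁ + 2) ∨ (i.val = 1 ∧ m₁ + 2 ≤ j.val)) →
      G.Adj (f i) (f j) := by
    rintro i j (⟨h0, hj1, hj2⟩ | ⟨h1, hj⟩)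
    · rw [hf, embedFun_zero m₁ m₂ v w g₁ g₂ i h0]
      by_cases hj' : j.val = 1
      · rw [embedFun_one m₁ m₂ v w g₁ g₂ j hj']
        exact hvw
      · rw [embedFun_left m₁ m₂ v w g₁ g₂ j (by omega) hj2]
        exact (SimpleGraph.mem_neighborFinset _ _ _).1 (hA (hL₁A (hg₁mem _)))
    · rw [hf, embedFun_one m₁ m₂ v w g₁ g₂ i h1,
        embedFun_right m₁ m₂ v w g₁ g₂ j hj]
      exact (SimpleGraph.mem_neighborFinset _ _ _).1 (hL₂Nw (hg₂mem _))
  -- injectivity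
  have hinj : Function.Injective f := by
    intro i j hij
    rcases regions i with hi | hi | hi | hi <;> rcases regions j with hj | hj | hj | hj
    · exact Fin.ext (by omega)
    · rw [hf, embedFun_zero m₁ m₂ v w g₁ g₂ i hi,
        embedFun_one m₁ m₂ v w g₁ g₂ j hj] at hij
      exact absurd hij hvw'
    · rw [hf, embedFun_zero m₁ m₂ v w g₁ g₂ i hi,
        embedFun_left m₁ m₂ v w g₁ g₂ j hj.1 hj.2] at hij
      exact absurd (hij ▸ hg₁mem _) hvL₁
    · rw [hf, embedFun_zero m₁ m₂ v w g₁ g₂ i hi,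
        embedFun_right m₁ m₂ v w g₁ g₂ j hj] at hij
      exact absurd (hij ▸ hg₂mem _) hvL₂
    · rw [hf, embedFun_one m₁ m₂ v w g₁ g₂ i hi,
        embedFun_zero m₁ m₂ v w g₁ g₂ j hj] at hij
      exact absurd hij.symm hvw'
    · exact Fin.ext (by omega)
    · rw [hf, embedFun_one m₁ m₂ v w g₁ g₂ i hi,
        embedFun_left m₁ m₂ v w g₁ g₂ j hj.1 hj.2] at hij
      exact absurd (hij ▸ hg₁mem _) hwL₁
    · rw [hf, embedFun_one m₁ m₂ v w g₁ g₂ i hi,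
        embedFun_right m₁ m₂ v w g₁ g₂ j hj] at hij
      exact absurd (hij ▸ hg₂mem _) hwL₂
    · rw [hf, embedFun_left m₁ m₂ v w g₁ g₂ i hi.1 hi.2,
        embedFun_zero m₁ m₂ v w g₁ g₂ j hj] at hij
      exact absurd (hij ▸ hg₁mem _) hvL₁
    · rw [hf, embedFun_left m₁ m₂ v w g₁ g₂ i hi.1 hi.2,
        embedFun_one m₁ m₂ v w g₁ g₂ j hj] at hij
      exact absurd (hij ▸ hg₁mem _) hwL₁
    · rw [hf, embedFun_left m₁ m₂ v w g₁ g₂ i hi.1 hi.2,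
        embedFun_left m₁ m₂ v w g₁ g₂ j hj.1 hj.2] at hij
      have := hg₁inj hij
      have : i.val - 2 = j.val - 2 := congrArg Fin.val this
      exact Fin.ext (by omega)
    · rw [hf, embedFun_left m₁ m₂ v w g₁ g₂ i hi.1 hi.2,
        embedFun_right m₁ m₂ v w g₁ g₂ j hj] at hij
      exact absurd (hij ▸ hg₂mem _) (Finset.disjoint_left.1 hdisj12 (hg₁mem _))
    · rw [hf, embedFun_right m₁ m₂ v w g₁ g₂ i hi,
        embedFun_zero m₁ m₂ v w g₁ g₂ j hj] at hij
      exact absurd (hij ▸ hg₂mem _) hvL₂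
    · rw [hf, embedFun_right m₁ m₂ v w g₁ g₂ i hi,
        embedFun_one m₁ m₂ v w g₁ g₂ j hj] at hij
      exact absurd (hij ▸ hg₂mem _) hwL₂
    · rw [hf, embedFun_right m₁ m₂ v w g₁ g₂ i hi,
        embedFun_left m₁ m₂ v w g₁ g₂ j hj.1 hj.2] at hij
      exact absurd (hij.symm ▸ hg₂mem _) (Finset.disjoint_left.1 hdisj12 (hg₁mem _))
    · rw [hf, embedFun_right m₁ m₂ v w g₁ g₂ i hi,
        embedFun_right m₁ m₂ v w g₁ g₂ j hj] at hij
      have := hg₂inj hij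
      have : i.val - (m₁ + 2) = j.val - (m₁ + 2) := congrArg Fin.val this
      exact Fin.ext (by omega)
  refine hG ⟨⟨f, ?_⟩, hinj⟩
  intro a b hab
  rw [DoubleStar, SimpleGraph.fromRel_adj] at hab
  obtain ⟨hne, h | h⟩ := hab
  · exact key a b h
  · exact (key b a h).symm
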